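/- In a discrete Bayesian network, let C, S, D be pairwise disjoint sets of nodes such that (i) every parent of every node of C lies in C ∪ S, and (ii) every node of S ∪ D is a nondescendant of every node of C. Then for every assignment of values (x_C, x_S, x_D) such that the conditioning event has positive probability, ℙ(X_C = x_C | X_S = x_S, X_D = x_D) = ℙ(X_C = x_C | X_S = x_S) = ∏_{v ∈ C} k_v(values of pa v read from (x_C, x_S))(x_v), where X_C, X_S, X_D denote the tuples of coordinate random variables indexed by C, S, D under the measure induced by μ. -/

import Mathlib

open scoped BigOperators Classical ENNReal

noncomputable section

/-- A discrete Bayesian network: finite nonempty value types `E v` for the nodes `v : Fin n`,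
a parent map `pa` compatible with the ordering (`w ∈ pa v → w < v`), and for each node a
kernel assigning to every assignment of values to the parents a probability mass function
on `E v`. -/
structure BayesNet where
  n : ℕ
  E : Fin n → Type
  Efin : ∀ v, Fintype (E v)
  Ene : ∀ v, Nonempty (E v)
  pa : Fin n → Finset (Fin n)
  pa_lt : ∀ ⦃v w⦄, w ∈ pa v → w < v
  k : ∀ v, (∀ w : pa v, E w.1) → PMF (E v)

namespace BayesNet

variable (B : BayesNet)

instance (v : Fin B.n) : Fintype (B.E v) := B.Efin v
instance (v : Fin B.n) : Nonempty (B.E v) := B.Ene v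

/-- A configuration: a joint assignment of values to all nodes. -/
def Cfg := ∀ v, B.E v

instance : Nonempty B.Cfg := ⟨fun _ => Classical.arbitrary _⟩
instance : Fintype B.Cfg := by unfold Cfg; infer_instance

/-- The joint probability mass function: `μ {x} = ∏ v, k v (x restricted to pa v) (x v)`. -/
def jointPMF (x : B.Cfg) : ℝ≥0∞ := ∏ v, B.k v (fun w => x w.1) (x v)

/-- Elementary probability of an event under the joint probability mass function. -/
def prob (A : Set B.Cfg) : ℝ≥0∞ := ∑' x : B.Cfg, A.indicator B.jointPMF x

/-- Elementary conditional probability `ℙ(A | B) = ℙ(A ∩ B)/ℙ(B)`. -/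
def condProb (A C : Set B.Cfg) : ℝ≥0∞ := B.prob (A ∩ C) / B.prob C

/-- `w` is a descendant of `v`: there is a directed path of length `≥ 1` from `v` to `w`
(edges are `u → v` for `u ∈ pa v`). -/
def Desc (v w : Fin B.n) : Prop := Relation.TransGen (fun a b => a ∈ B.pa b) v w

/-- `w` is a nondescendant of `v`: `w ≠ v` and `w` is not a descendant of `v`. -/
def Nondesc (v w : Fin B.n) : Prop := w ≠ v ∧ ¬ B.Desc v w

/-- The event that all coordinates in `V` agree with the reference configuration `z`. -/
def evt (V : Finset (Fin B.n)) (z : B.Cfg) : Set B.Cfg := {x | ∀ v ∈ V, x v = z v}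

/-! ### Auxiliary machinery -/

variable {B}

/-- The factor of the joint PMF attached to a node. -/
def kfun (v : Fin B.n) : B.Cfg → ℝ≥0∞ := fun x => B.k v (fun w => x w.1) (x v)

/-- The indicator of agreement with `z` at a single coordinate. -/
def dfun (z : B.Cfg) (v : Fin B.n) : B.Cfg → ℝ≥0∞ := fun x => if x v = z v then 1 else 0

lemma kfun_dep (v : Fin B.n) (x y : B.Cfg) (h : ∀ w, w ≤ v → x w = y w) :
    kfun v x = kfun v y := by
  unfold kfun
  have h1 : (fun w : B.pa v => x w.1) = fun w : B.pa v => y w.1 :=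
    funext fun w => h w.1 (le_of_lt (B.pa_lt w.2))
  rw [h1, h v le_rfl]

lemma kfun_update (v : Fin B.n) (x : B.Cfg) (a : B.E v) :
    kfun v (Function.update x v a) = B.k v (fun w => x w.1) a := by
  unfold kfun
  have h1 : (fun w : B.pa v => Function.update x v a w.1) = fun w : B.pa v => x w.1 :=
    funext fun w => Function.update_of_ne (ne_of_lt (B.pa_lt w.2)) _ _
  rw [h1, show Function.update x v a v = a from Function.update_self _ _ _]

lemma kfun_sum (v : Fin B.n) (x : B.Cfg) :
    ∑ a : B.E v, kfun v (Function.update x v a) = 1 := by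
  have h2 : ∑ a : B.E v, (B.k v (fun w => x w.1)) a = 1 := by
    have := (B.k v (fun w => x w.1)).tsum_coe
    rwa [tsum_fintype] at this
  calc ∑ a : B.E v, kfun v (Function.update x v a)
      = ∑ a : B.E v, (B.k v (fun w => x w.1)) a :=
        Finset.sum_congr rfl fun a _ => kfun_update v x a
    _ = 1 := h2

lemma dfun_dep (z : B.Cfg) (v : Fin B.n) (x y : B.Cfg) (h : ∀ w, w ≤ v → x w = y w) :
    dfun z v x = dfun z v y := by
  unfold dfun
  rw [h v le_rfl]

lemma dfun_sum (z : B.Cfg) (v : Fin B.n) (x : B.Cfg) :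
    ∑ a : B.E v, dfun z v (Function.update x v a) = 1 := by
  unfold dfun
  simp [show ∀ b, Function.update x v b v = b from fun b => Function.update_self _ _ _]

/-- Summing out a single coordinate against a probability kernel. -/
lemma sum_step (v : Fin B.n) (f g : B.Cfg → ℝ≥0∞)
    (hf : ∀ x y : B.Cfg, (∀ w, w ≠ v → x w = y w) → f x = f y)
    (hg : ∀ x : B.Cfg, ∑ a : B.E v, g (Function.update x v a) = 1) :
    (Fintype.card (B.E v) : ℝ≥0∞) * ∑ x : B.Cfg, f x * g x = ∑ x : B.Cfg, f x := by
  classical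
  let e := Equiv.piSplitAt v B.E
  have hsum : ∀ h : B.Cfg → ℝ≥0∞,
      ∑ x : B.Cfg, h x
        = ∑ a : B.E v, ∑ r : ∀ j : { j // j ≠ v }, B.E j.1, h (e.symm (a, r)) := by
    intro h
    calc ∑ x : B.Cfg, h x
        = ∑ p : B.E v × ∀ j : { j // j ≠ v }, B.E j.1, h (e.symm p) :=
          Fintype.sum_equiv e (fun x => h x) (fun p => h (e.symm p))
            (fun x => (congrArg h (e.symm_apply_apply x)).symm)
      _ = ∑ a : B.E v, ∑ r : ∀ j : { j // j ≠ v }, B.E j.1, h (e.symm (a, r)) :=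
          Fintype.sum_prod_type _
  have upd : ∀ (a a' : B.E v) (r : ∀ j : { j // j ≠ v }, B.E j.1),
      (e.symm (a, r) : B.Cfg) = Function.update (e.symm (a', r)) v a := by
    intro a a' r
    funext w
    by_cases hw : w = v
    · subst hw
      simp [e, Equiv.piSplitAt, Function.update_self]
    · simp [e, Equiv.piSplitAt, hw, Function.update_of_ne hw]
  obtain ⟨a0⟩ : Nonempty (B.E v) := inferInstance
  have hfr : ∀ (a : B.E v) (r : ∀ j : { j // j ≠ v }, B.E j.1),
      f (e.symm (a, r)) = f (e.symm (a0, r)) := by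
    intro a r
    apply hf
    intro w hw
    rw [upd a a0 r, Function.update_of_ne hw]
  have hgr : ∀ r : ∀ j : { j // j ≠ v }, B.E j.1,
      ∑ a : B.E v, g (e.symm (a, r)) = 1 := by
    intro r
    calc ∑ a : B.E v, g (e.symm (a, r))
        = ∑ a : B.E v, g (Function.update (e.symm (a0, r)) v a) :=
          Finset.sum_congr rfl fun a _ => by rw [upd a a0 r]
      _ = 1 := hg _
  calc (Fintype.card (B.E v) : ℝ≥0∞) * ∑ x : B.Cfg, f x * g x
      = (Fintype.card (B.E v) : ℝ≥0∞) *
          ∑ a : B.E v, ∑ r : ∀ j : { j // j ≠ v }, B.E j.1,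
            f (e.symm (a, r)) * g (e.symm (a, r)) := by rw [hsum]
    _ = (Fintype.card (B.E v) : ℝ≥0∞) *
          ∑ r : ∀ j : { j // j ≠ v }, B.E j.1, ∑ a : B.E v,
            f (e.symm (a, r)) * g (e.symm (a, r)) := by rw [Finset.sum_comm]
    _ = (Fintype.card (B.E v) : ℝ≥0∞) *
          ∑ r : ∀ j : { j // j ≠ v }, B.E j.1,
            f (e.symm (a0, r)) * ∑ a : B.E v, g (e.symm (a, r)) := by
          congr 1
          refine Finset.sum_congr rfl fun r _ => ?_
          rw [Finset.mul_sum]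
          exact Finset.sum_congr rfl fun a _ => by rw [hfr a r]
    _ = (Fintype.card (B.E v) : ℝ≥0∞) *
          ∑ r : ∀ j : { j // j ≠ v }, B.E j.1, f (e.symm (a0, r)) := by
          congr 1
          exact Finset.sum_congr rfl fun r _ => by rw [hgr r, mul_one]
    _ = ∑ a : B.E v, ∑ r : ∀ j : { j // j ≠ v }, B.E j.1, f (e.symm (a, r)) := by
          rw [Finset.sum_congr rfl fun (a : B.E v) _ =>
            Finset.sum_congr rfl fun r _ => hfr a r]
          rw [Finset.sum_const, Finset.card_univ, nsmul_eq_mul]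
    _ = ∑ x : B.Cfg, f x := (hsum f).symm

/-- Summing out a set of coordinates, each against a normalized local factor
depending only on earlier coordinates. -/
lemma sum_mul_prod (g : ∀ v : Fin B.n, B.Cfg → ℝ≥0∞)
    (hdep : ∀ (v : Fin B.n) (x y : B.Cfg), (∀ w, w ≤ v → x w = y w) → g v x = g v y)
    (hgs : ∀ (v : Fin B.n) (x : B.Cfg), ∑ a : B.E v, g v (Function.update x v a) = 1)
    (Bs : Finset (Fin B.n)) :
    ∀ f : B.Cfg → ℝ≥0∞, (∀ x y : B.Cfg, (∀ w, w ∉ Bs → x w = y w) → f x = f y) →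
      (∏ v ∈ Bs, (Fintype.card (B.E v) : ℝ≥0∞)) *
          ∑ x : B.Cfg, f x * ∏ v ∈ Bs, g v x
        = ∑ x : B.Cfg, f x := by
  classical
  induction Bs using Finset.induction_on_max with
  | empty => intro f hf; simp
  | insert a s hmax ih =>
    intro f hf
    have ha : a ∉ s := fun h => lt_irrefl a (hmax a h)
    have hF : ∀ x y : B.Cfg, (∀ w, w ≠ a → x w = y w) →
        f x * ∏ v ∈ s, g v x = f y * ∏ v ∈ s, g v y := by
      intro x y h
      have hfx : f x = f y := hf x y fun w hw =>
        h w (fun hwa => hw (hwa ▸ Finset.mem_insert_self a s))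
      have hpr : ∏ v ∈ s, g v x = ∏ v ∈ s, g v y :=
        Finset.prod_congr rfl fun v hv =>
          hdep v x y fun w hw => h w (ne_of_lt (lt_of_le_of_lt hw (hmax v hv)))
      rw [hfx, hpr]
    have hstep := sum_step a (fun x => f x * ∏ v ∈ s, g v x) (g a) hF (hgs a)
    have hfs : ∀ x y : B.Cfg, (∀ w, w ∉ s → x w = y w) → f x = f y := by
      intro x y h
      exact hf x y fun w hw => h w fun hws => hw (Finset.mem_insert_of_mem hws)
    calc (∏ v ∈ insert a s, (Fintype.card (B.E v) : ℝ≥0∞)) *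
          ∑ x : B.Cfg, f x * ∏ v ∈ insert a s, g v x
        = (∏ v ∈ s, (Fintype.card (B.E v) : ℝ≥0∞)) *
            ((Fintype.card (B.E a) : ℝ≥0∞) *
              ∑ x : B.Cfg, (f x * ∏ v ∈ s, g v x) * g a x) := by
          rw [Finset.prod_insert ha,
            Finset.sum_congr rfl fun (x : B.Cfg) _ => by
              rw [Finset.prod_insert ha, mul_comm (g a x) (∏ v ∈ s, g v x),
                ← mul_assoc]]
          ring
      _ = (∏ v ∈ s, (Fintype.card (B.E v) : ℝ≥0∞)) *
            ∑ x : B.Cfg, f x * ∏ v ∈ s, g v x := by rw [hstep]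
      _ = ∑ x : B.Cfg, f x := ih f hfs


lemma prob_evt (U : Finset (Fin B.n)) (z : B.Cfg) :
    B.prob (B.evt U z)
      = ∑ x : B.Cfg, (∏ v ∈ U, dfun z v x) * ∏ v : Fin B.n, kfun v x := by
  rw [prob, tsum_fintype]
  refine Finset.sum_congr rfl fun x _ => ?_
  have hmem : x ∈ B.evt U z ↔ ∀ v ∈ U, x v = z v := Iff.rfl
  rw [Set.indicator_apply]
  by_cases hx : ∀ v ∈ U, x v = z v
  · rw [if_pos (hmem.mpr hx)]
    have h1 : ∏ v ∈ U, dfun z v x = 1 := by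
      unfold dfun
      rw [Finset.prod_boole, if_pos hx]
    rw [h1, one_mul]
    rfl
  · rw [if_neg (fun h => hx (hmem.mp h))]
    have h1 : ∏ v ∈ U, dfun z v x = 0 := by
      unfold dfun
      rw [Finset.prod_boole, if_neg hx]
    rw [h1, zero_mul]

lemma card_prod_ne_zero (W : Finset (Fin B.n)) :
    (∏ v ∈ W, (Fintype.card (B.E v) : ℝ≥0∞)) ≠ 0 :=
  Finset.prod_ne_zero_iff.mpr fun v _ => by
    exact_mod_cast Fintype.card_ne_zero (α := B.E v)

lemma card_prod_ne_top (W : Finset (Fin B.n)) :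
    (∏ v ∈ W, (Fintype.card (B.E v) : ℝ≥0∞)) ≠ ⊤ := by
  refine (ENNReal.prod_lt_top ?_).ne
  intro v _
  exact ENNReal.natCast_lt_top _

lemma sum_jointPMF : ∑ x : B.Cfg, B.jointPMF x = 1 := by
  have h := sum_mul_prod (B := B) kfun kfun_dep kfun_sum Finset.univ
    (fun _ => (1 : ℝ≥0∞)) (fun _ _ _ => rfl)
  have hcard : (∑ x : B.Cfg, (1 : ℝ≥0∞))
      = ∏ v ∈ (Finset.univ : Finset (Fin B.n)), (Fintype.card (B.E v) : ℝ≥0∞) := by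
    rw [Finset.sum_const, Finset.card_univ, nsmul_eq_mul, mul_one]
    have hc : Fintype.card B.Cfg = ∏ v : Fin B.n, Fintype.card (B.E v) :=
      (Fintype.card_congr (show B.Cfg ≃ ∀ v, B.E v from Equiv.refl _)).trans
        Fintype.card_pi
    rw [hc]
    push_cast
    rfl
  have hjoint : ∀ x : B.Cfg, B.jointPMF x = ∏ v : Fin B.n, kfun v x := fun x => rfl
  rw [Finset.sum_congr rfl fun x _ => hjoint x]
  have h2 : (∏ v ∈ (Finset.univ : Finset (Fin B.n)), (Fintype.card (B.E v) : ℝ≥0∞)) *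
      ∑ x : B.Cfg, ∏ v : Fin B.n, kfun v x
        = ∏ v ∈ (Finset.univ : Finset (Fin B.n)), (Fintype.card (B.E v) : ℝ≥0∞) := by
    calc _ = (∏ v ∈ (Finset.univ : Finset (Fin B.n)), (Fintype.card (B.E v) : ℝ≥0∞)) *
          ∑ x : B.Cfg, (1 : ℝ≥0∞) * ∏ v ∈ Finset.univ, kfun v x := by
            congr 1
            exact Finset.sum_congr rfl fun x _ => by rw [one_mul]
      _ = ∑ x : B.Cfg, (1 : ℝ≥0∞) := h
      _ = _ := hcard
  exact (ENNReal.mul_right_inj (card_prod_ne_zero Finset.univ)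
    (card_prod_ne_top Finset.univ)).mp (by rw [mul_one]; exact h2)

lemma prob_le_one (A : Set B.Cfg) : B.prob A ≤ 1 := by
  rw [prob, tsum_fintype]
  calc ∑ x : B.Cfg, A.indicator B.jointPMF x
      ≤ ∑ x : B.Cfg, B.jointPMF x :=
        Finset.sum_le_sum fun x _ => Set.indicator_le_self A B.jointPMF x
    _ = 1 := sum_jointPMF

lemma prob_ne_top (A : Set B.Cfg) : B.prob A ≠ ⊤ :=
  ne_top_of_le_ne_top ENNReal.one_ne_top (prob_le_one A)

lemma prob_mono {A A' : Set B.Cfg} (h : A ⊆ A') : B.prob A ≤ B.prob A' := by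
  rw [prob, prob, tsum_fintype, tsum_fintype]
  exact Finset.sum_le_sum fun x _ =>
    Set.indicator_le_indicator_of_subset h (fun a => zero_le) x

lemma evt_inter (U V : Finset (Fin B.n)) (z : B.Cfg) :
    B.evt U z ∩ B.evt V z = B.evt (U ∪ V) z := by
  ext x
  constructor
  · rintro ⟨h1, h2⟩ v hv
    rcases Finset.mem_union.mp hv with h | h
    exacts [h1 v h, h2 v h]
  · intro h
    exact ⟨fun v hv => h v (Finset.mem_union_left _ hv),
      fun v hv => h v (Finset.mem_union_right _ hv)⟩

/-- The key factorization: conditioning set `T` of nondescendants containing all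
outside parents of `C`. -/
lemma key (B : BayesNet) (C T : Finset (Fin B.n)) (hCT : Disjoint C T)
    (hpa : ∀ v ∈ C, B.pa v ⊆ C ∪ T)
    (hnd : ∀ w ∈ T, ∀ v ∈ C, B.Nondesc v w) (z : B.Cfg) :
    B.prob (B.evt (C ∪ T) z)
      = (∏ v ∈ C.attach, B.k v.1 (fun w => z w.1) (z v.1)) * B.prob (B.evt T z) := by
  classical
  set K : ℝ≥0∞ := ∏ v ∈ C.attach, B.k v.1 (fun w => z w.1) (z v.1) with hKdef
  have hKC : K = ∏ v ∈ C, B.k v (fun w => z w.1) (z v) :=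
    Finset.prod_attach C (fun u => B.k u (fun w => z w.1) (z u))
  -- ancestral closure of T
  set A' : Finset (Fin B.n) :=
    Finset.univ.filter (fun w => w ∈ T ∨ ∃ t ∈ T, B.Desc w t) with hA'def
  have hTA' : T ⊆ A' := fun w hw => Finset.mem_filter.mpr ⟨Finset.mem_univ _, Or.inl hw⟩
  have hA'cl : ∀ v ∈ A', B.pa v ⊆ A' := by
    intro v hv u hu
    rcases (Finset.mem_filter.mp hv).2 with hvT | ⟨t, ht, hdesc⟩
    · exact Finset.mem_filter.mpr ⟨Finset.mem_univ _,
        Or.inr ⟨v, hvT, Relation.TransGen.single hu⟩⟩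
    · exact Finset.mem_filter.mpr ⟨Finset.mem_univ _,
        Or.inr ⟨t, ht, Relation.TransGen.head hu hdesc⟩⟩
  have hCA' : Disjoint C A' := by
    rw [Finset.disjoint_left]
    intro v hvC hvA'
    rcases (Finset.mem_filter.mp hvA').2 with hvT | ⟨t, ht, hdesc⟩
    · exact (Finset.disjoint_left.mp hCT hvC) hvT
    · exact (hnd t ht v hvC).2 hdesc
  set A : Finset (Fin B.n) := C ∪ A' with hAdef
  have hAcl : ∀ v ∈ A, B.pa v ⊆ A := by
    intro v hv u hu
    rcases Finset.mem_union.mp hv with hvC | hvA'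
    · rcases Finset.mem_union.mp (hpa v hvC hu) with h | h
      · exact Finset.mem_union_left _ h
      · exact Finset.mem_union_right _ (hTA' h)
    · exact Finset.mem_union_right _ (hA'cl v hvA' hu)
  have hCA : C ⊆ A := Finset.subset_union_left
  have hTA : T ⊆ A := hTA'.trans Finset.subset_union_right
  have hcompl : A'ᶜ = C ∪ Aᶜ := by
    ext v
    simp only [Finset.mem_compl, Finset.mem_union, hAdef, not_or]
    constructor
    · intro h
      by_cases hc : v ∈ C
      · exact Or.inl hc
      · exact Or.inr ⟨hc, h⟩
    · rintro (hc | ⟨-, h⟩)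
      · exact Finset.disjoint_left.mp hCA' hc
      · exact h
  have hdisjCAc : Disjoint C Aᶜ := by
    rw [Finset.disjoint_left]
    intro v hv hvc
    exact (Finset.mem_compl.mp hvc) (hCA hv)
  -- Step 1 : sum out A-complement in the big event
  have e1 : (∏ v ∈ Aᶜ, (Fintype.card (B.E v) : ℝ≥0∞)) * B.prob (B.evt (C ∪ T) z)
      = ∑ x : B.Cfg, ((∏ v ∈ C ∪ T, dfun z v x) * ∏ v ∈ A, kfun v x) := by
    rw [prob_evt]
    have hsplit : ∀ x : B.Cfg,
        (∏ v ∈ C ∪ T, dfun z v x) * ∏ v : Fin B.n, kfun v x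
          = ((∏ v ∈ C ∪ T, dfun z v x) * ∏ v ∈ A, kfun v x) * ∏ v ∈ Aᶜ, kfun v x := by
      intro x
      rw [mul_assoc, Finset.prod_mul_prod_compl]
    rw [Finset.sum_congr rfl fun x _ => hsplit x]
    refine sum_mul_prod kfun kfun_dep kfun_sum Aᶜ _ ?_
    intro x y h
    have hA : ∀ w ∈ A, x w = y w := fun w hw =>
      h w (fun hc => (Finset.mem_compl.mp hc) hw)
    have h1 : ∏ v ∈ C ∪ T, dfun z v x = ∏ v ∈ C ∪ T, dfun z v y :=
      Finset.prod_congr rfl fun v hv => by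
        unfold dfun
        rw [hA v (by
          rcases Finset.mem_union.mp hv with h' | h'
          exacts [hCA h', hTA h'])]
    have h2 : ∏ v ∈ A, kfun v x = ∏ v ∈ A, kfun v y :=
      Finset.prod_congr rfl fun v hv => by
        unfold kfun
        have hp : (fun w : B.pa v => x w.1) = fun w : B.pa v => y w.1 :=
          funext fun w => hA w.1 (hAcl v hv w.2)
        rw [hp, hA v hv]
    rw [h1, h2]
  -- Step 2 : extract the constant K
  have e2 : ∀ x : B.Cfg,
      (∏ v ∈ C ∪ T, dfun z v x) * ∏ v ∈ A, kfun v x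
        = K * ((∏ v ∈ C, dfun z v x) *
            ((∏ v ∈ T, dfun z v x) * ∏ v ∈ A', kfun v x)) := by
    intro x
    rw [Finset.prod_union hCT, hAdef, Finset.prod_union hCA']
    by_cases hx : ∀ v ∈ C ∪ T, x v = z v
    · have hC : ∏ v ∈ C, kfun v x = K := by
        rw [hKC]
        refine Finset.prod_congr rfl fun v hv => ?_
        unfold kfun
        have hp : (fun w : B.pa v => x w.1) = fun w : B.pa v => z w.1 :=
          funext fun w => hx w.1 (hpa v hv w.2)
        rw [hp, hx v (Finset.mem_union_left _ hv)]
      rw [hC]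
      ring
    · push_neg at hx
      obtain ⟨v, hv, hne⟩ := hx
      have h0 : dfun z v x = 0 := by unfold dfun; rw [if_neg hne]
      rcases Finset.mem_union.mp hv with hvC | hvT
      · rw [Finset.prod_eq_zero hvC h0]
        ring
      · rw [Finset.prod_eq_zero hvT h0]
        ring
  -- Step 3 : sum out C
  have e3 : (∏ v ∈ C, (Fintype.card (B.E v) : ℝ≥0∞)) *
      ∑ x : B.Cfg, ((∏ v ∈ C, dfun z v x) *
        ((∏ v ∈ T, dfun z v x) * ∏ v ∈ A', kfun v x))
      = ∑ x : B.Cfg, ((∏ v ∈ T, dfun z v x) * ∏ v ∈ A', kfun v x) := by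
    have := sum_mul_prod (dfun z) (dfun_dep z) (dfun_sum z) C
      (fun x => (∏ v ∈ T, dfun z v x) * ∏ v ∈ A', kfun v x) ?_
    · calc (∏ v ∈ C, (Fintype.card (B.E v) : ℝ≥0∞)) *
          ∑ x : B.Cfg, ((∏ v ∈ C, dfun z v x) *
            ((∏ v ∈ T, dfun z v x) * ∏ v ∈ A', kfun v x))
          = (∏ v ∈ C, (Fintype.card (B.E v) : ℝ≥0∞)) *
            ∑ x : B.Cfg, ((∏ v ∈ T, dfun z v x) * ∏ v ∈ A', kfun v x)
              * ∏ v ∈ C, dfun z v x := by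
            congr 1
            exact Finset.sum_congr rfl fun x _ => by ring
        _ = _ := this
    · intro x y h
      have hxy : ∀ w ∈ A', x w = y w := fun w hw =>
        h w (Finset.disjoint_right.mp hCA' hw)
      have h1 : ∏ v ∈ T, dfun z v x = ∏ v ∈ T, dfun z v y :=
        Finset.prod_congr rfl fun v hv => by
          unfold dfun; rw [hxy v (hTA' hv)]
      have h2 : ∏ v ∈ A', kfun v x = ∏ v ∈ A', kfun v y :=
        Finset.prod_congr rfl fun v hv => by
          unfold kfun
          have hp : (fun w : B.pa v => x w.1) = fun w : B.pa v => y w.1 :=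
            funext fun w => hxy w.1 (hA'cl v hv w.2)
          rw [hp, hxy v hv]
      rw [h1, h2]
  -- Step 4 : the small event
  have e4 : (∏ v ∈ A'ᶜ, (Fintype.card (B.E v) : ℝ≥0∞)) * B.prob (B.evt T z)
      = ∑ x : B.Cfg, ((∏ v ∈ T, dfun z v x) * ∏ v ∈ A', kfun v x) := by
    rw [prob_evt]
    have hsplit : ∀ x : B.Cfg,
        (∏ v ∈ T, dfun z v x) * ∏ v : Fin B.n, kfun v x
          = ((∏ v ∈ T, dfun z v x) * ∏ v ∈ A', kfun v x) * ∏ v ∈ A'ᶜ, kfun v x := by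
      intro x
      rw [mul_assoc, Finset.prod_mul_prod_compl]
    rw [Finset.sum_congr rfl fun x _ => hsplit x]
    refine sum_mul_prod kfun kfun_dep kfun_sum A'ᶜ _ ?_
    intro x y h
    have hxy : ∀ w ∈ A', x w = y w := fun w hw =>
      h w (fun hc => (Finset.mem_compl.mp hc) hw)
    have h1 : ∏ v ∈ T, dfun z v x = ∏ v ∈ T, dfun z v y :=
      Finset.prod_congr rfl fun v hv => by
        unfold dfun; rw [hxy v (hTA' hv)]
    have h2 : ∏ v ∈ A', kfun v x = ∏ v ∈ A', kfun v y :=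
      Finset.prod_congr rfl fun v hv => by
        unfold kfun
        have hp : (fun w : B.pa v => x w.1) = fun w : B.pa v => y w.1 :=
          funext fun w => hxy w.1 (hA'cl v hv w.2)
        rw [hp, hxy v hv]
    rw [h1, h2]
  -- Combine
  have main : (∏ v ∈ A'ᶜ, (Fintype.card (B.E v) : ℝ≥0∞)) * B.prob (B.evt (C ∪ T) z)
      = (∏ v ∈ A'ᶜ, (Fintype.card (B.E v) : ℝ≥0∞)) * (K * B.prob (B.evt T z)) := by
    calc (∏ v ∈ A'ᶜ, (Fintype.card (B.E v) : ℝ≥0∞)) * B.prob (B.evt (C ∪ T) z)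
        = (∏ v ∈ C, (Fintype.card (B.E v) : ℝ≥0∞)) *
            ((∏ v ∈ Aᶜ, (Fintype.card (B.E v) : ℝ≥0∞)) * B.prob (B.evt (C ∪ T) z)) := by
          rw [hcompl, Finset.prod_union hdisjCAc, mul_assoc]
      _ = (∏ v ∈ C, (Fintype.card (B.E v) : ℝ≥0∞)) *
            ∑ x : B.Cfg, ((∏ v ∈ C ∪ T, dfun z v x) * ∏ v ∈ A, kfun v x) := by rw [e1]
      _ = (∏ v ∈ C, (Fintype.card (B.E v) : ℝ≥0∞)) *
            (K * ∑ x : B.Cfg, ((∏ v ∈ C, dfun z v x) *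
              ((∏ v ∈ T, dfun z v x) * ∏ v ∈ A', kfun v x))) := by
          rw [Finset.sum_congr rfl fun x _ => e2 x, ← Finset.mul_sum]
      _ = K * ((∏ v ∈ C, (Fintype.card (B.E v) : ℝ≥0∞)) *
            ∑ x : B.Cfg, ((∏ v ∈ C, dfun z v x) *
              ((∏ v ∈ T, dfun z v x) * ∏ v ∈ A', kfun v x))) := by ring
      _ = K * ∑ x : B.Cfg, ((∏ v ∈ T, dfun z v x) * ∏ v ∈ A', kfun v x) := by rw [e3]
      _ = K * ((∏ v ∈ A'ᶜ, (Fintype.card (B.E v) : ℝ≥0∞)) * B.prob (B.evt T z)) := by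
          rw [e4]
      _ = _ := by ring
  exact (ENNReal.mul_right_inj (card_prod_ne_zero A'ᶜ) (card_prod_ne_top A'ᶜ)).mp main

theorem condProb_factorization (B : BayesNet) (C S D : Finset (Fin B.n))
    (hCS : Disjoint C S) (hCD : Disjoint C D) (hSD : Disjoint S D)
    (hpa : ∀ v ∈ C, B.pa v ⊆ C ∪ S)
    (hnd : ∀ w ∈ S ∪ D, ∀ v ∈ C, B.Nondesc v w)
    (z : B.Cfg)
    (hpos : B.prob (B.evt (S ∪ D) z) ≠ 0) :
    B.condProb (B.evt C z) (B.evt (S ∪ D) z) = B.condProb (B.evt C z) (B.evt S z) ∧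
    B.condProb (B.evt C z) (B.evt S z) =
      ∏ v ∈ C.attach, B.k v.1 (fun w => z w.1) (z v.1) := by
  classical
  set K : ℝ≥0∞ := ∏ v ∈ C.attach, B.k v.1 (fun w => z w.1) (z v.1) with hKdef
  have hCSD : Disjoint C (S ∪ D) := Finset.disjoint_union_right.mpr ⟨hCS, hCD⟩
  have h1 := key B C (S ∪ D) hCSD
    (fun v hv => (hpa v hv).trans
      (Finset.union_subset_union_right Finset.subset_union_left)) hnd z
  have h2 := key B C S hCS hpa
    (fun w hw => hnd w (Finset.mem_union_left _ hw)) z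
  have hsub : B.evt (S ∪ D) z ⊆ B.evt S z := fun x hx v hv =>
    hx v (Finset.mem_union_left _ hv)
  have hposS : B.prob (B.evt S z) ≠ 0 := by
    intro h
    exact hpos (le_antisymm (le_trans (prob_mono hsub) h.le) zero_le)
  have c1 : B.condProb (B.evt C z) (B.evt (S ∪ D) z) = K := by
    rw [condProb, evt_inter, h1, mul_div_assoc,
      ENNReal.div_self hpos (prob_ne_top _), mul_one]
  have c2 : B.condProb (B.evt C z) (B.evt S z) = K := by
    rw [condProb, evt_inter, h2, mul_div_assoc,
      ENNReal.div_self hposS (prob_ne_top _), mul_one]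
  exact ⟨c1.trans c2.symm, c2⟩

end BayesNet
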